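/- Let n be a natural number, let ω be a nonzero real (or complex) number, g a constant, and for vectors x, y : Fin n → ℂ with pairwise distinct denominators define H_red(x, y) = Σ_i ((y i)²/2 + ω²(x i)²/2) + g² Σ_{i<j} 1/(x i − x j)² (requiring x injective) and H_dual(x, y) = Σ_i ((y i)²/2 + ω²(x i)²/2) + ω² g² Σ_{i<j} 1/(y i − y j)² (requiring y injective). Then for any q, p : Fin n → ℂ with p injective, H_dual(q, p) = H_red(−p/ω, ω·q), i.e., the map q_i ↦ −p_i/ω, p_i ↦ ω·q_i transforms the reduced harmonic oscillator Hamiltonian into the dual one. -/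

import Mathlib

/-- Reduced Hamiltonian of the matrix harmonic oscillator: rational Calogero in a harmonic
well, with inverse-square interaction in the coordinates. -/
noncomputable def Hred (n : ℕ) (ω g : ℂ) (x y : Fin n → ℂ) : ℂ :=
  (∑ i, ((y i) ^ 2 / 2 + ω ^ 2 * (x i) ^ 2 / 2))
    + g ^ 2 * ∑ i, ∑ j, if i < j then 1 / (x i - x j) ^ 2 else 0

/-- Dual Hamiltonian of the matrix harmonic oscillator: interaction in the momenta with
coupling `ω²g²`. -/
noncomputable def Hdual (n : ℕ) (ω g : ℂ) (x y : Fin n → ℂ) : ℂ :=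
  (∑ i, ((y i) ^ 2 / 2 + ω ^ 2 * (x i) ^ 2 / 2))
    + ω ^ 2 * g ^ 2 * ∑ i, ∑ j, if i < j then 1 / (y i - y j) ^ 2 else 0

/-- Self-duality of the reduced matrix harmonic oscillator: the map
`q_i ↦ −p_i/ω, p_i ↦ ω·q_i` transforms the reduced Hamiltonian into the dual one. -/
theorem harmonic_oscillator_self_dual (n : ℕ) (ω g : ℂ) (hω : ω ≠ 0)
    (q p : Fin n → ℂ) (hp : Function.Injective p) :
    Hdual n ω g q p = Hred n ω g (fun i => -(p i) / ω) (fun i => ω * q i) := by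
  unfold Hdual Hred
  congr 1
  · apply Finset.sum_congr rfl
    intro i _
    field_simp
    ring
  · rw [Finset.mul_sum, Finset.mul_sum]
    apply Finset.sum_congr rfl
    intro i _
    rw [Finset.mul_sum, Finset.mul_sum]
    apply Finset.sum_congr rfl
    intro j _
    by_cases h : i < j
    · simp only [h, if_true]
      have hij : p i - p j ≠ 0 := sub_ne_zero.mpr (fun e => absurd (hp e) (ne_of_lt h))
      have : -p i / ω - -p j / ω = -(p i - p j) / ω := by ring
      rw [this, div_pow, neg_pow, one_div_div]
      field_simp
    · simp [h]
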